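/- For odd i dividing 2n (so i divides n), the number ψ_n(i) of elements of the wreath product S_2 ≀ S_n (acting on [n] × [2]) whose cycle type consists of 2n/i cycles all of length i equals 2^n · n! / (2^{n/i} · i^{n/i} · (n/i)!). -/

import Mathlib

open Nat Finset
open scoped Fin.NatCast

/-- The permutation of `[n] × [2]` induced by the element `(τ, σ̄)` of the wreath
product `S_2 ≀ S_n`: `(a, b) ↦ (τ a, σ_a b)`. -/
def wreathPerm {n : ℕ} (τ : Equiv.Perm (Fin n)) (σ : Fin n → Equiv.Perm (Fin 2)) :
    Equiv.Perm (Fin n × Fin 2) where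
  toFun p := (τ p.1, σ p.1 p.2)
  invFun p := (τ⁻¹ p.1, (σ (τ⁻¹ p.1))⁻¹ p.2)
  left_inv p := by simp
  right_inv p := by simp

abbrev G2 := Equiv.Perm (Fin 2)

lemma G2.mul_self (g : G2) : g * g = 1 := by
  have h : g ^ Fintype.card G2 = 1 := pow_card_eq_one
  simpa [Fintype.card_perm, sq] using h

lemma G2.eq_one_of_fix {g : G2} {b : Fin 2} (h : g b = b) : g = 1 := by
  revert h; revert b; revert g; decide

section nprod
variable {γ : Type*}

def nprod (s : ℕ → G2) : ℕ → G2
  | 0 => 1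
  | k+1 => s k * nprod s k

lemma nprod_congr {s s' : ℕ → G2} : ∀ {k}, (∀ t < k, s t = s' t) → nprod s k = nprod s' k
  | 0, _ => rfl
  | k+1, h => by
      rw [nprod, nprod, h k (Nat.lt_succ_self k), nprod_congr (fun t ht => h t (ht.trans (Nat.lt_succ_self k)))]

lemma nprod_add (s : ℕ → G2) (j k : ℕ) :
    nprod s (j + k) = nprod (fun t => s (t + k)) j * nprod s k := by
  induction j with
  | zero => simp [nprod]
  | succ j ih => rw [Nat.succ_add, nprod, nprod, ih, mul_assoc]

def Pk (τ : Equiv.Perm γ) (σ : γ → G2) (k : ℕ) (a : γ) : G2 :=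
  nprod (fun t => σ ((τ ^ t) a)) k

lemma Pk_zero (τ : Equiv.Perm γ) (σ : γ → G2) (a : γ) : Pk τ σ 0 a = 1 := rfl

lemma Pk_succ (τ : Equiv.Perm γ) (σ : γ → G2) (k : ℕ) (a : γ) :
    Pk τ σ (k+1) a = σ ((τ ^ k) a) * Pk τ σ k a := rfl

lemma Pk_one (τ : Equiv.Perm γ) (σ : γ → G2) (a : γ) : Pk τ σ 1 a = σ a := by
  simp [Pk, nprod]

lemma Pk_add (τ : Equiv.Perm γ) (σ : γ → G2) (j k : ℕ) (a : γ) :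
    Pk τ σ (j + k) a = Pk τ σ j ((τ ^ k) a) * Pk τ σ k a := by
  rw [Pk, nprod_add]
  congr 1
  refine nprod_congr fun t _ => ?_
  simp [pow_add, Equiv.Perm.mul_apply]

lemma Pk_succ' (τ : Equiv.Perm γ) (σ : γ → G2) (k : ℕ) (a : γ) :
    Pk τ σ (k+1) a = Pk τ σ k (τ a) * σ a := by
  have := Pk_add τ σ k 1 a
  simpa [Pk_one] using this

/-- the induced permutation power formula -/
lemma wreath_pow {n : ℕ} (τ : Equiv.Perm (Fin n)) (σ : Fin n → G2) (k : ℕ) (a : Fin n) (b : Fin 2) :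
    ((wreathPerm τ σ) ^ k) (a, b) = ((τ ^ k) a, Pk τ σ k a b) := by
  induction k generalizing a b with
  | zero => simp [Pk_zero]
  | succ k ih =>
      rw [pow_succ, Equiv.Perm.mul_apply]
      show ((wreathPerm τ σ) ^ k) (τ a, σ a b) = _
      rw [ih, Pk_succ']
      simp [pow_succ, Equiv.Perm.mul_apply]

end nprod

open Function in
lemma perm_minPeriod_pos {γ : Type*} [Finite γ] (p : Equiv.Perm γ) (x : γ) :
    0 < minimalPeriod (⇑p) x := by
  refine IsPeriodicPt.minimalPeriod_pos (orderOf_pos p) ?_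
  show (⇑p)^[orderOf p] x = x
  rw [Equiv.Perm.iterate_eq_pow, pow_orderOf_eq_one]
  rfl

open Function in
lemma cond_iff {n i : ℕ} (hi : Odd i) (τ : Equiv.Perm (Fin n)) (σ : Fin n → G2) :
    (∀ x, Function.minimalPeriod (wreathPerm τ σ) x = i) ↔
      (∀ a, Function.minimalPeriod (⇑τ) a = i) ∧ (∀ a, Pk τ σ i a = 1) := by
  have hipos : 0 < i := hi.pos
  have hiter : ∀ (k : ℕ) (a : Fin n) (b : Fin 2),
      (⇑(wreathPerm τ σ))^[k] (a, b) = ((τ ^ k) a, Pk τ σ k a b) := by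
    intro k a b
    rw [Equiv.Perm.iterate_eq_pow, wreath_pow]
  constructor
  · intro H
    have hper : ∀ a b, (τ ^ i) a = a ∧ Pk τ σ i a b = b := by
      intro a b
      have h0 := isPeriodicPt_minimalPeriod (⇑(wreathPerm τ σ)) (a, b)
      rw [H (a, b)] at h0
      have := h0
      rw [IsPeriodicPt, IsFixedPt, hiter] at this
      exact ⟨congrArg Prod.fst this, congrArg Prod.snd this⟩
    constructor
    · intro a
      have hτi : IsPeriodicPt (⇑τ) i a := by
        rw [IsPeriodicPt, IsFixedPt, Equiv.Perm.iterate_eq_pow]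
        exact (hper a 0).1
      set d := minimalPeriod (⇑τ) a with hd
      have hdpos : 0 < d := hτi.minimalPeriod_pos hipos
      have hdvd : d ∣ i := hτi.minimalPeriod_dvd
      have hτd : (τ ^ d) a = a := by
        have := isPeriodicPt_minimalPeriod (⇑τ) a
        rwa [IsPeriodicPt, IsFixedPt, Equiv.Perm.iterate_eq_pow, ← hd] at this
      have h2d : IsPeriodicPt (⇑(wreathPerm τ σ)) (d + d) (a, (0 : Fin 2)) := by
        rw [IsPeriodicPt, IsFixedPt, hiter]
        have hPk : Pk τ σ (d + d) a = 1 := by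
          rw [Pk_add, hτd, G2.mul_self]
        rw [hPk, pow_add, Equiv.Perm.mul_apply, hτd, hτd]
        rfl
      have hidvd : i ∣ d * 2 := by
        have := h2d.minimalPeriod_dvd
        rw [H (a, 0)] at this
        rwa [show d + d = d * 2 by ring] at this
      have : i ∣ d := hi.coprime_two_right.dvd_of_dvd_mul_right hidvd
      exact Nat.dvd_antisymm hdvd this
    · intro a
      exact Equiv.ext fun b => (hper a b).2
  · rintro ⟨h1, h2⟩ ⟨a, b⟩
    have hτi : (τ ^ i) a = a := by
      have := isPeriodicPt_minimalPeriod (⇑τ) a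
      rwa [h1 a, IsPeriodicPt, IsFixedPt, Equiv.Perm.iterate_eq_pow] at this
    have hper : IsPeriodicPt (⇑(wreathPerm τ σ)) i (a, b) := by
      rw [IsPeriodicPt, IsFixedPt, hiter, hτi, h2 a]
      rfl
    refine Nat.dvd_antisymm hper.minimalPeriod_dvd ?_
    have h0 := isPeriodicPt_minimalPeriod (⇑(wreathPerm τ σ)) (a, b)
    rw [IsPeriodicPt, IsFixedPt, hiter] at h0
    have hτm : IsPeriodicPt (⇑τ) (minimalPeriod (⇑(wreathPerm τ σ)) (a, b)) a := by
      rw [IsPeriodicPt, IsFixedPt, Equiv.Perm.iterate_eq_pow]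
      exact congrArg Prod.fst h0
    exact h1 a ▸ hτm.minimalPeriod_dvd

section Count

open Function

/-- The counting condition: every cycle of `τ` has length `i` and the product of the
`σ`-values along every cycle is trivial. -/
def WCond (i : ℕ) {γ : Type*} (τ : Equiv.Perm γ) (σ : γ → G2) : Prop :=
  (∀ a, Function.minimalPeriod (⇑τ) a = i) ∧ ∀ a, Pk τ σ i a = 1

/-- The set being counted. -/
def WT (i : ℕ) (γ : Type*) : Type _ := {p : Equiv.Perm γ × (γ → G2) // WCond i p.1 p.2}

instance (i : ℕ) (γ : Type*) [Finite γ] : Finite (WT i γ) := by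
  unfold WT; infer_instance

lemma Pk_cycle {γ : Type*} (τ : Equiv.Perm γ) (σ : γ → G2) (i : ℕ) (a : γ)
    (ha : (τ ^ i) a = a) (h1 : Pk τ σ i a = 1) : ∀ k, Pk τ σ i ((τ ^ k) a) = 1 := by
  intro k
  induction k with
  | zero => simpa using h1
  | succ k ih =>
      set c := (τ ^ k) a with hc
      have hcomm : (τ ^ i) c = c := by
        rw [hc, ← Equiv.Perm.mul_apply, ← pow_add, add_comm, pow_add, Equiv.Perm.mul_apply, ha]
      have key : Pk τ σ i (τ c) * σ c = σ ((τ ^ i) c) * Pk τ σ i c := by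
        rw [← Pk_succ' τ σ i c, ← Pk_succ τ σ i c]
      rw [hcomm, ih, mul_one] at key
      replace key : Pk τ σ i (τ c) = 1 := mul_eq_right.mp key
      rw [add_comm k 1, pow_add, pow_one, Equiv.Perm.mul_apply, ← hc]
      exact key

set_option linter.unusedSectionVars false

variable {i' : ℕ} {α : Type} [DecidableEq α] [Fintype α]

/-- Membership in the orbit tuple. -/
def Porb (o : Fin (i' + 1) → α) (a : α) : Prop := ∃ j, o j = a

instance (o : Fin (i' + 1) → α) : DecidablePred (Porb o) := fun _ =>
  Fintype.decidableExistsFintype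

noncomputable def orbEquiv {o : Fin (i' + 1) → α} (ho : Function.Injective o) :
    Fin (i' + 1) ≃ {a // Porb o a} :=
  Equiv.ofBijective (fun j => ⟨o j, j, rfl⟩)
    ⟨fun j k h => ho (congrArg Subtype.val h), by rintro ⟨a, j, rfl⟩; exact ⟨j, rfl⟩⟩

lemma orbEquiv_symm_apply {o : Fin (i' + 1) → α} (ho : Function.Injective o) (j : Fin (i' + 1))
    (h : Porb o (o j)) : (orbEquiv ho).symm ⟨o j, h⟩ = j := by
  rw [Equiv.symm_apply_eq]; rfl

noncomputable def tauFull {o : Fin (i' + 1) → α} (ho : Function.Injective o)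
    (τ' : Equiv.Perm {a // ¬ Porb o a}) : Equiv.Perm α :=
  (Equiv.sumCompl (Porb o)).permCongr
    (((orbEquiv ho).permCongr (finRotate (i' + 1))).sumCongr τ')

lemma tauFull_orbit {o : Fin (i' + 1) → α} (ho : Function.Injective o)
    (τ' : Equiv.Perm {a // ¬ Porb o a}) (j : Fin (i' + 1)) :
    tauFull ho τ' (o j) = o (j + 1) := by
  have h : Porb o (o j) := ⟨j, rfl⟩
  simp only [tauFull, Equiv.permCongr_apply]
  rw [Equiv.sumCompl_symm_apply_of_pos h]
  simp only [Equiv.sumCongr_apply, Sum.map_inl, Equiv.sumCompl_apply_inl,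
    Equiv.permCongr_apply, orbEquiv_symm_apply ho j h, finRotate_succ_apply]
  rfl

lemma tauFull_compl {o : Fin (i' + 1) → α} (ho : Function.Injective o)
    (τ' : Equiv.Perm {a // ¬ Porb o a}) (b : {a // ¬ Porb o a}) :
    tauFull ho τ' ↑b = ↑(τ' b) := by
  simp only [tauFull, Equiv.permCongr_apply]
  rw [Equiv.sumCompl_symm_apply_of_neg b.2]
  simp

lemma tauFull_pow_orbit {o : Fin (i' + 1) → α} (ho : Function.Injective o)
    (τ' : Equiv.Perm {a // ¬ Porb o a}) (k : ℕ) (j : Fin (i' + 1)) :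
    (tauFull ho τ' ^ k) (o j) = o (j + (k : Fin (i' + 1))) := by
  induction k with
  | zero => simp
  | succ k ih =>
      rw [add_comm k 1, pow_add, pow_one, Equiv.Perm.mul_apply, ih, tauFull_orbit ho]
      congr 1
      push_cast
      open Fin.CommRing in ring

lemma tauFull_pow_compl {o : Fin (i' + 1) → α} (ho : Function.Injective o)
    (τ' : Equiv.Perm {a // ¬ Porb o a}) (k : ℕ) (b : {a // ¬ Porb o a}) :
    (tauFull ho τ' ^ k) ↑b = ↑((τ' ^ k) b) := by
  induction k with
  | zero => simp
  | succ k ih =>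
      rw [add_comm k 1, pow_add, pow_add, pow_one, pow_one, Equiv.Perm.mul_apply,
        Equiv.Perm.mul_apply, ih, tauFull_compl ho]

noncomputable def sigFull {o : Fin (i' + 1) → α} (ho : Function.Injective o) (s : Fin (i' + 1) → G2)
    (σ' : {a // ¬ Porb o a} → G2) : α → G2 := fun a =>
  if h : Porb o a then s ((orbEquiv ho).symm ⟨a, h⟩) else σ' ⟨a, h⟩

lemma sigFull_orbit {o : Fin (i' + 1) → α} (ho : Function.Injective o) (s : Fin (i' + 1) → G2)
    (σ' : {a // ¬ Porb o a} → G2) (j : Fin (i' + 1)) : sigFull ho s σ' (o j) = s j := by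
  rw [sigFull, dif_pos (show Porb o (o j) from ⟨j, rfl⟩), orbEquiv_symm_apply]

lemma sigFull_compl {o : Fin (i' + 1) → α} (ho : Function.Injective o) (s : Fin (i' + 1) → G2)
    (σ' : {a // ¬ Porb o a} → G2) (b : {a // ¬ Porb o a}) : sigFull ho s σ' ↑b = σ' b := by
  rw [sigFull, dif_neg b.2]


open Function in
lemma minp_orbit {o : Fin (i' + 1) → α} (ho : Function.Injective o)
    (τ' : Equiv.Perm {a // ¬ Porb o a}) (j : Fin (i' + 1)) :
    Function.minimalPeriod (⇑(tauFull ho τ')) (o j) = i' + 1 := by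
  apply Nat.dvd_antisymm
  · refine IsPeriodicPt.minimalPeriod_dvd ?_
    rw [IsPeriodicPt, IsFixedPt, Equiv.Perm.iterate_eq_pow, tauFull_pow_orbit]
    simp
  · have h := isPeriodicPt_minimalPeriod (⇑(tauFull ho τ')) (o j)
    rw [IsPeriodicPt, IsFixedPt, Equiv.Perm.iterate_eq_pow, tauFull_pow_orbit] at h
    have h2 := ho h
    rw [add_eq_left, Fin.natCast_eq_zero] at h2
    exact h2

open Function in
lemma minp_compl {o : Fin (i' + 1) → α} (ho : Function.Injective o)
    (τ' : Equiv.Perm {a // ¬ Porb o a}) (b : {a // ¬ Porb o a}) :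
    Function.minimalPeriod (⇑(tauFull ho τ')) ↑b = Function.minimalPeriod (⇑τ') b := by
  apply Nat.dvd_antisymm
  · refine IsPeriodicPt.minimalPeriod_dvd ?_
    rw [IsPeriodicPt, IsFixedPt, Equiv.Perm.iterate_eq_pow, tauFull_pow_compl]
    have h := isPeriodicPt_minimalPeriod (⇑τ') b
    rw [IsPeriodicPt, IsFixedPt, Equiv.Perm.iterate_eq_pow] at h
    rw [h]
  · refine IsPeriodicPt.minimalPeriod_dvd ?_
    have h := isPeriodicPt_minimalPeriod (⇑(tauFull ho τ')) ↑b
    rw [IsPeriodicPt, IsFixedPt, Equiv.Perm.iterate_eq_pow, tauFull_pow_compl] at h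
    rw [IsPeriodicPt, IsFixedPt, Equiv.Perm.iterate_eq_pow]
    exact Subtype.coe_injective h

lemma pk_tauFull_compl {o : Fin (i' + 1) → α} (ho : Function.Injective o)
    (τ' : Equiv.Perm {a // ¬ Porb o a}) (s : Fin (i' + 1) → G2) (σ' : {a // ¬ Porb o a} → G2)
    (k : ℕ) (b : {a // ¬ Porb o a}) :
    Pk (tauFull ho τ') (sigFull ho s σ') k ↑b = Pk τ' σ' k b := by
  refine nprod_congr fun t _ => ?_
  rw [tauFull_pow_compl, sigFull_compl]

open Function in
lemma minp_subtypePerm {p : α → Prop} (τ : Equiv.Perm α) (h : ∀ x, p x ↔ p (τ x))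
    (b : {x // p x}) :
    Function.minimalPeriod (⇑(τ.subtypePerm (fun x => (h x).symm))) b = Function.minimalPeriod (⇑τ) ↑b := by
  have key : ∀ k (x : {x // p x}), ((τ.subtypePerm (fun x => (h x).symm) ^ k) x : α) = (τ ^ k) ↑x := by
    intro k x
    rw [Equiv.Perm.subtypePerm_pow]
    rfl
  apply Nat.dvd_antisymm
  · refine IsPeriodicPt.minimalPeriod_dvd ?_
    have h2 := isPeriodicPt_minimalPeriod (⇑τ) ↑b
    rw [IsPeriodicPt, IsFixedPt, Equiv.Perm.iterate_eq_pow] at h2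
    rw [IsPeriodicPt, IsFixedPt, Equiv.Perm.iterate_eq_pow]
    exact Subtype.coe_injective ((key _ b).trans h2)
  · refine IsPeriodicPt.minimalPeriod_dvd ?_
    have h2 := isPeriodicPt_minimalPeriod (⇑(τ.subtypePerm (fun x => (h x).symm))) b
    rw [IsPeriodicPt, IsFixedPt, Equiv.Perm.iterate_eq_pow] at h2
    rw [IsPeriodicPt, IsFixedPt, Equiv.Perm.iterate_eq_pow]
    rw [← key _ b, h2]

lemma pk_subtypePerm {p : α → Prop} (τ : Equiv.Perm α) (h : ∀ x, p x ↔ p (τ x))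
    (σ : α → G2) (k : ℕ) (b : {x // p x}) :
    Pk (τ.subtypePerm (fun x => (h x).symm)) (fun x => σ ↑x) k b = Pk τ σ k ↑b := by
  refine nprod_congr fun t _ => ?_
  simp only
  congr 1
  rw [Equiv.Perm.subtypePerm_pow]
  rfl


lemma pow_val_cast {γ : Type*} (τ : Equiv.Perm γ) (x : γ)
    (hmp : Function.minimalPeriod (⇑τ) x = i' + 1) (k : ℕ) :
    (τ ^ (((k : Fin (i' + 1))) : ℕ)) x = (τ ^ k) x := by
  have h := Function.iterate_mod_minimalPeriod_eq (f := ⇑τ) (x := x) (n := k)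
  rw [hmp] at h
  rw [Fin.val_natCast]
  simpa [Equiv.Perm.iterate_eq_pow] using h

lemma fib_app {o : Fin (i' + 1) → α} {x₀ : α} {τ : Equiv.Perm α}
    (hmp : Function.minimalPeriod (⇑τ) x₀ = i' + 1)
    (hfib : ∀ j : Fin (i' + 1), (τ ^ (j : ℕ)) x₀ = o j) (j : Fin (i' + 1)) :
    τ (o j) = o (j + 1) := by
  have h1 : (((j : ℕ) + 1 : ℕ) : Fin (i' + 1)) = j + 1 := by
    push_cast [Fin.cast_val_eq_self]
    rfl
  calc τ (o j) = (τ ^ ((j : ℕ) + 1)) x₀ := by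
        have hp : τ ^ ((j : ℕ) + 1) = τ * τ ^ (j : ℕ) := by
          rw [add_comm, pow_add, pow_one]
        rw [← hfib j, hp, Equiv.Perm.mul_apply]
    _ = (τ ^ ((((j : ℕ) + 1 : ℕ) : Fin (i' + 1)) : ℕ)) x₀ := (pow_val_cast τ x₀ hmp _).symm
    _ = o ((((j : ℕ) + 1 : ℕ) : Fin (i' + 1))) := hfib _
    _ = o (j + 1) := by rw [h1]

lemma fib_inv {o : Fin (i' + 1) → α} {x₀ : α} {τ : Equiv.Perm α}
    (hmp : Function.minimalPeriod (⇑τ) x₀ = i' + 1)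
    (hfib : ∀ j : Fin (i' + 1), (τ ^ (j : ℕ)) x₀ = o j) :
    ∀ a, ¬ Porb o a ↔ ¬ Porb o (τ a) := by
  intro a
  apply not_congr
  constructor
  · rintro ⟨j, rfl⟩
    exact ⟨j + 1, (fib_app hmp hfib j).symm⟩
  · rintro ⟨j, hj⟩
    have h2 : τ (o (j - 1)) = o j := by
      rw [fib_app hmp hfib (j - 1), sub_add_cancel]
    exact ⟨j - 1, τ.injective (h2.trans hj)⟩

/-- The tuple-product condition type. -/
def Scond (i' : ℕ) : Type :=
  {s : Fin (i' + 1) → G2 // nprod (fun t => s (t : Fin (i' + 1))) (i' + 1) = 1}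

/-- The fiber of the tuple map. -/
def FibT (o : Fin (i' + 1) → α) (x₀ : α) : Type _ :=
  {p : WT (i' + 1) α // ∀ j : Fin (i' + 1), (p.1.1 ^ (j : ℕ)) x₀ = o j}

instance (o : Fin (i' + 1) → α) (x₀ : α) : Finite (FibT o x₀) := by
  unfold FibT; infer_instance

noncomputable def fibEquiv (o : Fin (i' + 1) → α) (x₀ : α) (ho : Function.Injective o)
    (h0 : o 0 = x₀) : FibT o x₀ ≃ Scond i' × WT (i' + 1) {a // ¬ Porb o a} where
  toFun p :=
    ⟨⟨fun j => p.1.1.2 (o j), by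
      obtain ⟨⟨⟨τ, σ⟩, cond⟩, hfib⟩ := p
      have : nprod (fun t => σ (o ((t : ℕ) : Fin (i' + 1)))) (i' + 1) = Pk τ σ (i' + 1) x₀ := by
        refine nprod_congr fun t _ => ?_
        rw [← hfib ((t : ℕ) : Fin (i' + 1)), pow_val_cast τ x₀ (cond.1 x₀)]
      exact this.trans (cond.2 x₀)⟩,
     ⟨⟨p.1.1.1.subtypePerm (fun x => (fib_inv (p.1.2.1 x₀) p.2 x).symm), fun b => p.1.1.2 ↑b⟩, by
      obtain ⟨⟨⟨τ, σ⟩, cond⟩, hfib⟩ := p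
      constructor
      · intro b
        rw [minp_subtypePerm _ (fib_inv (cond.1 x₀) hfib)]
        exact cond.1 ↑b
      · intro b
        rw [pk_subtypePerm _ (fib_inv (cond.1 x₀) hfib)]
        exact cond.2 ↑b⟩⟩
  invFun q :=
    ⟨⟨⟨tauFull ho q.2.1.1, sigFull ho q.1.1 q.2.1.2⟩, by
      obtain ⟨⟨s, hs⟩, ⟨⟨τ', σ'⟩, cond'⟩⟩ := q
      have hfib : ∀ j : Fin (i' + 1), ((tauFull ho τ') ^ (j : ℕ)) x₀ = o j := by
        intro j
        rw [← h0, tauFull_pow_orbit, zero_add, Fin.cast_val_eq_self]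
      have hx₀per : ((tauFull ho τ') ^ (i' + 1)) x₀ = x₀ := by
        rw [← h0, tauFull_pow_orbit]
        simp
      have hx₀ : Pk (tauFull ho τ') (sigFull ho s σ') (i' + 1) x₀ = 1 := by
        have : Pk (tauFull ho τ') (sigFull ho s σ') (i' + 1) x₀ =
            nprod (fun t => s (t : Fin (i' + 1))) (i' + 1) := by
          refine nprod_congr fun t _ => ?_
          rw [← h0, tauFull_pow_orbit, zero_add, sigFull_orbit]
        exact this.trans hs
      constructor
      · intro a
        by_cases h : Porb o a
        · rcases h with ⟨j, rfl⟩
          exact minp_orbit ho τ' j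
        · have := minp_compl ho τ' ⟨a, h⟩
          rw [this]
          exact cond'.1 ⟨a, h⟩
      · intro a
        by_cases h : Porb o a
        · rcases h with ⟨j, rfl⟩
          rw [← hfib j]
          exact Pk_cycle _ _ _ _ hx₀per hx₀ (j : ℕ)
        · have := pk_tauFull_compl ho τ' s σ' (i' + 1) ⟨a, h⟩
          rw [this]
          exact cond'.2 ⟨a, h⟩⟩,
     by
      intro j
      show ((tauFull ho q.2.1.1) ^ (j : ℕ)) x₀ = o j
      rw [← h0, tauFull_pow_orbit, zero_add, Fin.cast_val_eq_self]⟩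
  left_inv := by
    rintro ⟨⟨⟨τ, σ⟩, cond⟩, hfib⟩
    refine Subtype.ext (Subtype.ext (Prod.ext ?_ ?_))
    · refine Equiv.ext fun a => ?_
      show tauFull ho _ a = τ a
      by_cases h : Porb o a
      · rcases h with ⟨j, rfl⟩
        rw [tauFull_orbit]
        exact (fib_app (cond.1 x₀) hfib j).symm
      · show tauFull ho _ ((⟨a, h⟩ : {a // ¬ Porb o a}) : α) = _
        rw [tauFull_compl]
        rfl
    · funext a
      show sigFull ho _ _ a = σ a
      by_cases h : Porb o a
      · rcases h with ⟨j, rfl⟩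
        rw [sigFull_orbit]
      · show sigFull ho _ _ ((⟨a, h⟩ : {a // ¬ Porb o a}) : α) = _
        rw [sigFull_compl]
  right_inv := by
    rintro ⟨⟨s, hs⟩, ⟨⟨τ', σ'⟩, cond'⟩⟩
    refine Prod.ext (Subtype.ext ?_) (Subtype.ext (Prod.ext ?_ ?_))
    · funext j
      exact sigFull_orbit ho s σ' j
    · refine Equiv.ext fun b => Subtype.ext ?_
      exact tauFull_compl ho τ' b
    · funext b
      exact sigFull_compl ho s σ' b



lemma snoc_nprod_key (t : Fin i' → G2) (x : G2) :
    nprod (fun k => (Fin.snoc t x : Fin (i' + 1) → G2) ((k : ℕ) : Fin (i' + 1))) (i' + 1)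
      = x * nprod (fun k => if h : k < i' then t ⟨k, h⟩ else 1) i' := by
  show (Fin.snoc t x : Fin (i' + 1) → G2) ((i' : ℕ) : Fin (i' + 1)) * _ = _
  congr 1
  · have h : ((i' : ℕ) : Fin (i' + 1)) = Fin.last i' := by
      ext
      simp [Fin.val_natCast, Nat.mod_eq_of_lt]
    rw [h, Fin.snoc_last]
  · refine nprod_congr fun k hk => ?_
    have h : ((k : ℕ) : Fin (i' + 1)) = Fin.castSucc ⟨k, hk⟩ := by
      ext
      simp [Fin.val_natCast, Nat.mod_eq_of_lt (by omega : k < i' + 1)]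
    rw [h, Fin.snoc_castSucc, dif_pos hk]

noncomputable def scondEquiv : Scond i' ≃ (Fin i' → G2) where
  toFun s := Fin.init s.1
  invFun t :=
    ⟨Fin.snoc t (nprod (fun k => if h : k < i' then t ⟨k, h⟩ else 1) i')⁻¹, by
      rw [snoc_nprod_key]
      exact inv_mul_cancel _⟩
  left_inv := by
    rintro ⟨s, hs⟩
    apply Subtype.ext
    show Fin.snoc (Fin.init s)
      (nprod (fun k => if h : k < i' then Fin.init s ⟨k, h⟩ else 1) i')⁻¹ = s
    have h2 : s (Fin.last i') *
        nprod (fun k => if h : k < i' then Fin.init s ⟨k, h⟩ else 1) i' = 1 := by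
      rw [← snoc_nprod_key, Fin.snoc_init_self s]
      exact hs
    rw [← mul_eq_one_iff_eq_inv.mp h2, Fin.snoc_init_self]
  right_inv t := by simp

lemma card_scond : Nat.card (Scond i') = 2 ^ i' := by
  rw [Nat.card_congr scondEquiv, Nat.card_eq_fintype_card, Fintype.card_fun]
  simp [Fintype.card_perm]

/-- Tuples starting at `x₀`. -/
def TT (i' : ℕ) (α : Type) (x₀ : α) : Type :=
  {o : Fin (i' + 1) → α // Function.Injective o ∧ o 0 = x₀}

instance (x₀ : α) : Fintype (TT i' α x₀) := by
  unfold TT; infer_instance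

def ttEquiv (x₀ : α) : TT i' α x₀ ≃ (Fin i' ↪ {a : α // a ≠ x₀}) where
  toFun o :=
    ⟨fun j => ⟨o.1 j.succ, fun h => Fin.succ_ne_zero j (o.2.1 (h.trans o.2.2.symm))⟩,
      fun j k h => Fin.succ_injective _ (o.2.1 (congrArg Subtype.val h))⟩
  invFun u :=
    ⟨fun j => Fin.cases x₀ (fun k => (u k : α)) j, by
      refine ⟨?_, ?_⟩
      · intro j k h
        induction j using Fin.cases with
        | zero =>
            induction k using Fin.cases with
            | zero => rfl
            | succ k =>
                simp only [Fin.cases_zero, Fin.cases_succ] at h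
                exact absurd h.symm (u k).2
        | succ j =>
            induction k using Fin.cases with
            | zero =>
                simp only [Fin.cases_zero, Fin.cases_succ] at h
                exact absurd h (u j).2
            | succ k =>
                simp only [Fin.cases_succ] at h
                exact congrArg Fin.succ (u.injective (Subtype.ext h))
      · simp⟩
  left_inv o := by
    apply Subtype.ext
    funext j
    induction j using Fin.cases with
    | zero =>
        simp only [Fin.cases_zero]
        exact o.2.2.symm
    | succ j =>
        simp only [Fin.cases_succ]
        rfl
  right_inv u := by
    apply DFunLike.ext
    intro j
    apply Subtype.ext
    simp only [Function.Embedding.coeFn_mk, Fin.cases_succ]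

lemma card_tt (x₀ : α) : Nat.card (TT i' α x₀) = (Fintype.card α - 1).descFactorial i' := by
  classical
  rw [Nat.card_congr (ttEquiv x₀), Nat.card_eq_fintype_card, Fintype.card_embedding_eq,
    Fintype.card_fin]
  congr 1
  have h := Fintype.card_subtype_compl (fun a : α => a = x₀)
  rw [Fintype.card_subtype_eq] at h
  rw [← h]

lemma card_compl_porb {o : Fin (i' + 1) → α} (ho : Function.Injective o) :
    Fintype.card {a : α // ¬ Porb o a} = Fintype.card α - (i' + 1) := by
  rw [Fintype.card_subtype_compl]
  congr 1
  rw [← Fintype.card_congr (orbEquiv ho), Fintype.card_fin]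

def tupleMap (x₀ : α) (p : WT (i' + 1) α) : TT i' α x₀ :=
  ⟨fun j => (p.1.1 ^ (j : ℕ)) x₀, by
    constructor
    · intro j k h
      have hinj := Function.iterate_injOn_Iio_minimalPeriod (f := ⇑p.1.1) (x := x₀)
      rw [p.2.1 x₀] at hinj
      refine Fin.ext (hinj (Set.mem_Iio.mpr j.isLt) (Set.mem_Iio.mpr k.isLt) ?_)
      simpa [Equiv.Perm.iterate_eq_pow] using h
    · simp⟩

lemma nat_card_sigma {ι : Type*} [Fintype ι] (F : ι → Type*) [∀ j, Finite (F j)] :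
    Nat.card (Σ j, F j) = ∑ j, Nat.card (F j) := by
  letI : ∀ j, Fintype (F j) := fun j => Fintype.ofFinite _
  rw [Nat.card_eq_fintype_card, Fintype.card_sigma]
  exact Finset.sum_congr rfl fun j _ => (Nat.card_eq_fintype_card).symm

end Count

theorem countW (i : ℕ) (hi : 0 < i) : ∀ (m : ℕ) (α : Type) [Fintype α] [DecidableEq α],
    Fintype.card α = i * m →
    Nat.card (WT i α) * (2 ^ m * i ^ m * m !) = 2 ^ (i * m) * (i * m)! := by
  intro m
  induction m with
  | zero =>
      intro α _ _ hcard
      rw [mul_zero] at hcard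
      have hempty : IsEmpty α := Fintype.card_eq_zero_iff.mp hcard
      have h1 : Nat.card (WT i α) = 1 := by
        have e : WT i α ≃ Equiv.Perm α × (α → G2) :=
          Equiv.subtypeUnivEquiv fun p => ⟨fun a => hempty.elim a, fun a => hempty.elim a⟩
        rw [Nat.card_congr e, Nat.card_eq_fintype_card, Fintype.card_prod, Fintype.card_perm,
          Fintype.card_fun, hcard]
        simp
      rw [h1]
      simp
  | succ m ih =>
      intro α _ _ hcard
      obtain ⟨i', rfl⟩ : ∃ i', i = i' + 1 := ⟨i - 1, by omega⟩
      have hpos : 0 < Fintype.card α := by rw [hcard]; positivity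
      obtain ⟨x₀⟩ := Fintype.card_pos_iff.mp hpos
      set C := 2 ^ m * (i' + 1) ^ m * m ! with hC
      set D := 2 ^ ((i' + 1) * m) * ((i' + 1) * m)! with hD
      have hCpos : 0 < C := by positivity
      -- fiber cardinality
      have hfibcard : ∀ o : TT i' α x₀, Nat.card (FibT o.1 x₀) = 2 ^ i' * (D / C) := by
        intro o
        have hβ : Fintype.card {a : α // ¬ Porb o.1 a} = (i' + 1) * m := by
          rw [card_compl_porb o.2.1, hcard]
          have hexp : (i' + 1) * (m + 1) = (i' + 1) * m + (i' + 1) := by ring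
          omega
        have ihβ := ih {a : α // ¬ Porb o.1 a} hβ
        have hWβ : Nat.card (WT (i' + 1) {a : α // ¬ Porb o.1 a}) = D / C :=
          (Nat.div_eq_of_eq_mul_left hCpos ihβ.symm).symm
        rw [Nat.card_congr (fibEquiv o.1 x₀ o.2.1 o.2.2), Nat.card_prod, card_scond, hWβ]
      have hCD : C ∣ D := by
        have h := ih (Fin ((i' + 1) * m)) (by simp)
        exact Dvd.intro_left _ h
      -- total cardinality
      have htot : Nat.card (WT (i' + 1) α) = Nat.card (TT i' α x₀) * (2 ^ i' * (D / C)) := by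
        have e1 : WT (i' + 1) α ≃ Σ o : TT i' α x₀, {p : WT (i' + 1) α // tupleMap x₀ p = o} :=
          (Equiv.sigmaFiberEquiv (tupleMap x₀)).symm
        have e2 : ∀ o : TT i' α x₀,
            {p : WT (i' + 1) α // tupleMap x₀ p = o} ≃ FibT o.1 x₀ := fun o =>
          Equiv.subtypeEquivRight fun p => by
            exact Subtype.ext_iff.trans funext_iff
        rw [Nat.card_congr (e1.trans (Equiv.sigmaCongrRight e2)), nat_card_sigma]
        rw [Finset.sum_congr rfl fun o _ => hfibcard o, Finset.sum_const, Finset.card_univ,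
          smul_eq_mul, ← Nat.card_eq_fintype_card]
      -- arithmetic
      set n := (i' + 1) * (m + 1) with hn
      have hnge : i' + 1 ≤ n := Nat.le_mul_of_pos_right _ (Nat.succ_pos m)
      have hnpos : 0 < n := by positivity
      have hn1 : n - 1 + 1 = n := Nat.succ_pred_eq_of_pos hnpos
      have hsub : (i' + 1) * m = n - (i' + 1) := by
        have hexp : n = (i' + 1) * m + (i' + 1) := by rw [hn]; ring
        omega
      have K2 : 2 ^ i' * 2 ^ ((i' + 1) * m) * 2 = 2 ^ n := by
        rw [← pow_add, ← pow_succ]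
        congr 1
        rw [hn]; ring
      have K3 : (n - 1).descFactorial i' * (((i' + 1) * m)! * n) = n ! := by
        have h2 : n * (n - 1).descFactorial i' = n.descFactorial (i' + 1) := by
          calc n * (n - 1).descFactorial i' = ((n - 1) + 1) * (n - 1).descFactorial i' := by
                rw [hn1]
            _ = ((n - 1) + 1).descFactorial (i' + 1) := (Nat.succ_descFactorial_succ _ _).symm
            _ = n.descFactorial (i' + 1) := by rw [hn1]
        calc (n - 1).descFactorial i' * (((i' + 1) * m)! * n)
            = (n - (i' + 1))! * (n * (n - 1).descFactorial i') := by rw [hsub]; ring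
          _ = (n - (i' + 1))! * n.descFactorial (i' + 1) := by rw [h2]
          _ = n ! := Nat.factorial_mul_descFactorial hnge
      have hC' : 2 ^ (m + 1) * (i' + 1) ^ (m + 1) * (m + 1)! = 2 * (i' + 1) * (m + 1) * C := by
        rw [hC, pow_succ, pow_succ, Nat.factorial_succ]
        ring
      rw [htot, card_tt, hcard, hC']
      rw [show Nat.card (TT i' α x₀) = (Fintype.card α - 1).descFactorial i' from card_tt x₀] at *
      calc ((i' + 1) * (m + 1) - 1).descFactorial i' * (2 ^ i' * (D / C)) *
            (2 * (i' + 1) * (m + 1) * C)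
          = 2 ^ i' * 2 * ((n - 1).descFactorial i' * ((i' + 1) * (m + 1)) * (D / C * C)) := by
            rw [hn]; ring
        _ = 2 ^ i' * 2 * ((n - 1).descFactorial i' * n * D) := by
            rw [Nat.div_mul_cancel hCD, hn]
        _ = 2 ^ i' * 2 ^ ((i' + 1) * m) * 2 * ((n - 1).descFactorial i' * (((i' + 1) * m)! * n)) := by
            rw [hD]; ring
        _ = 2 ^ n * n ! := by rw [K2, K3]
        _ = 2 ^ ((i' + 1) * (m + 1)) * ((i' + 1) * (m + 1))! := by rw [hn]
/-- For odd `i` dividing `2n` (hence `i ∣ n`), the number of elements of the wreath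
product `S_2 ≀ S_n` whose induced permutation of `[n] × [2]` has all cycles of length
`i` equals `2^n · n! / (2^{n/i} · i^{n/i} · (n/i)!)`. -/
theorem card_wreath_cycle_type_odd (n i : ℕ) (hn : 0 < n) (hi : Odd i) (hd : i ∣ 2 * n) :
    Nat.card {p : Equiv.Perm (Fin n) × (Fin n → Equiv.Perm (Fin 2)) //
        ∀ x, Function.minimalPeriod (wreathPerm p.1 p.2) x = i} =
      2 ^ n * n ! / (2 ^ (n / i) * i ^ (n / i) * (n / i)!) := by
  have hipos : 0 < i := hi.pos
  have hin : i ∣ n := hi.coprime_two_right.dvd_of_dvd_mul_left hd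
  set m := n / i with hm
  have hnm : i * m = n := Nat.mul_div_cancel' hin
  have e : {p : Equiv.Perm (Fin n) × (Fin n → Equiv.Perm (Fin 2)) //
        ∀ x, Function.minimalPeriod (wreathPerm p.1 p.2) x = i} ≃ WT i (Fin n) :=
    Equiv.subtypeEquivRight fun p => (cond_iff hi p.1 p.2).trans Iff.rfl
  rw [Nat.card_congr e]
  have hcount := countW i hipos m (Fin n) (by rw [Fintype.card_fin, hnm])
  rw [hnm] at hcount
  have hKpos : 0 < 2 ^ m * i ^ m * m ! := by positivity
  exact (Nat.div_eq_of_eq_mul_left hKpos hcount.symm).symm
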